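/- Let G be a finite connected simple graph and let x ≠ y be vertices of G. Then κ(x,y) = (1/d(x,y)) · sup_B Σ_{u,v ∈ V(G)} B(u,v) d(u,v), where the supremum is taken over all *-couplings B between m_x^0 and m_y^0 and κ(x,y) is the Lin–Lu–Yau curvature. -/

import Mathlib

open scoped BigOperators

namespace LLY

variable {V : Type*}

/-- Degree of a vertex (as `Nat.card` of its neighbor set; agrees with the usual
degree in a locally finite graph). -/
noncomputable def deg (G : SimpleGraph V) (u : V) : ℕ := Nat.card (G.neighborSet u)

/-- `G` is locally finite. -/
def LocFin (G : SimpleGraph V) : Prop := ∀ v : V, (G.neighborSet v).Finite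

/-- `f` is 1-Lipschitz with respect to the graph distance of `G`. -/
def Lip1 (G : SimpleGraph V) (f : V → ℝ) : Prop :=
  ∀ a b : V, |f a - f b| ≤ (G.dist a b : ℝ)

/-- The (normalized) graph Laplacian `Δf(u) = (1/d(u)) ∑_{v ∈ N(u)} (f v - f u)`. -/
noncomputable def lap (G : SimpleGraph V) (f : V → ℝ) (u : V) : ℝ :=
  (1 / (deg G u : ℝ)) * ∑ᶠ v ∈ G.neighborSet u, (f v - f u)

/-- The gradient `∇_{xy} f = (f x - f y)/d(x,y)`. -/
noncomputable def grad (G : SimpleGraph V) (f : V → ℝ) (x y : V) : ℝ :=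
  (f x - f y) / (G.dist x y : ℝ)

/-- Lin–Lu–Yau curvature of the pair `{x,y}` (limit-free Münch–Wojciechowski form):
`κ(x,y) = inf { ∇_{xy} Δf : f 1-Lipschitz, ∇_{yx} f = 1 }`. -/
noncomputable def kappa (G : SimpleGraph V) (x y : V) : ℝ :=
  sInf {k : ℝ | ∃ f : V → ℝ, Lip1 G f ∧ grad G f y x = 1 ∧ k = grad G (lap G f) x y}

end LLY

namespace LLY

variable {V : Type*}

open Classical in
/-- The idleness-0 random walk distribution at `x`: `m_x^0(u) = 1/d(x)` on `N(x)`. -/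
noncomputable def m0 (G : SimpleGraph V) (x u : V) : ℝ :=
  if u ∈ G.neighborSet x then 1 / (deg G x : ℝ) else 0

/-- `B` is a `*`-coupling between `m_x^0` and `m_y^0`. -/
def IsStarCoupling (G : SimpleGraph V) (x y : V) (B : V × V → ℝ) : Prop :=
  (Function.support B).Finite ∧
  0 < B (x, y) ∧
  (∀ p : V × V, p ≠ (x, y) → B p ≤ 0) ∧
  (∑ᶠ p : V × V, B p) = 0 ∧
  (∀ u : V, u ≠ x → ∑ᶠ v : V, B (u, v) = - m0 G x u) ∧
  (∀ v : V, v ≠ y → ∑ᶠ u : V, B (u, v) = - m0 G y v)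

end LLY


-- ===== auxiliary material: finite-dimensional Farkas lemma and LP duality =====
set_option linter.unusedSectionVars false

open scoped InnerProductSpace

namespace LLYAux

variable {H : Type*} [NormedAddCommGroup H] [InnerProductSpace ℝ H] [FiniteDimensional ℝ H]
variable {J : Type*} [Fintype J]

open Classical in
lemma caratheodory_cone (a : J → H) :
    ∀ (n : ℕ) (z : J → ℝ), (Finset.univ.filter fun j => z j ≠ 0).card ≤ n → (∀ j, 0 ≤ z j) →
    ∃ (s : Finset J) (z' : J → ℝ), LinearIndependent ℝ (fun j : s => a j) ∧ (∀ j, 0 ≤ z' j) ∧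
      (∀ j ∉ s, z' j = 0) ∧ ∑ j, z' j • a j = ∑ j, z j • a j := by
  intro n
  induction n with
  | zero =>
    intro z hcard hz
    have hz0 : ∀ j, z j = 0 := by
      intro j
      by_contra hj
      have : j ∈ Finset.univ.filter fun j => z j ≠ 0 := by simp [hj]
      have := Finset.card_pos.mpr ⟨j, this⟩
      omega
    refine ⟨∅, z, ?_, hz, fun j _ => hz0 j, rfl⟩
    have : IsEmpty ((∅ : Finset J) : Type _) := by simp; infer_instance
    exact linearIndependent_empty_type
  | succ n ih =>
    intro z hcard hz
    set s₀ := Finset.univ.filter fun j => z j ≠ 0 with hs₀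
    by_cases hind : LinearIndependent ℝ (fun j : s₀ => a j)
    · refine ⟨s₀, z, hind, hz, fun j hj => ?_, rfl⟩
      by_contra hne
      exact hj (by simp [hs₀, hne])
    · obtain ⟨g, hgsum, i₁, hi₁⟩ := Fintype.not_linearIndependent_iff.mp hind
      set c : J → ℝ := fun j => if h : j ∈ s₀ then g ⟨j, h⟩ else 0 with hc
      have hc0 : ∀ j ∉ s₀, c j = 0 := fun j hj => dif_neg hj
      have hcsum : ∑ j, c j • a j = 0 := by
        rw [← Finset.sum_subset (Finset.subset_univ s₀)
          (fun j _ hj => by rw [hc0 j hj, zero_smul])]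
        rw [← Finset.sum_coe_sort s₀ (fun j => c j • a j)]
        rw [← hgsum]
        exact Finset.sum_congr rfl fun j _ => by simp [hc, j.2]
      have hcne : ∃ j, c j ≠ 0 := ⟨i₁, by simpa [hc, i₁.2] using hi₁⟩
      -- get a version with a positive entry
      obtain ⟨d, hd0, hdsum, j₁, hj₁⟩ :
          ∃ d : J → ℝ, (∀ j ∉ s₀, d j = 0) ∧ (∑ j, d j • a j = 0) ∧ ∃ j, 0 < d j := by
        obtain ⟨j, hj⟩ := hcne
        rcases lt_or_gt_of_ne hj with hneg | hpos
        · refine ⟨-c, fun j hj => by simp [hc0 j hj], by simp [hcsum], j, by simpa using hneg⟩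
        · exact ⟨c, hc0, hcsum, j, hpos⟩
      have hj₁s : j₁ ∈ s₀ := by
        by_contra h
        rw [hd0 j₁ h] at hj₁
        exact lt_irrefl 0 hj₁
      set P := s₀.filter fun j => 0 < d j with hP
      obtain ⟨j₀, hj₀P, hj₀min⟩ :=
        P.exists_min_image (fun j => z j / d j) ⟨j₁, by simp [hP, hj₁s, hj₁]⟩
      have hj₀s : j₀ ∈ s₀ := (Finset.mem_filter.mp hj₀P).1
      have hdj₀ : 0 < d j₀ := (Finset.mem_filter.mp hj₀P).2
      set lam := z j₀ / d j₀ with hlam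
      have hlam0 : 0 ≤ lam := div_nonneg (hz j₀) hdj₀.le
      set z' : J → ℝ := fun j => z j - lam * d j with hz'
      have hz'0 : ∀ j, 0 ≤ z' j := by
        intro j
        by_cases hdj : 0 < d j
        · have hjP : j ∈ P := by
            refine Finset.mem_filter.mpr ⟨?_, hdj⟩
            by_contra h
            rw [hd0 j h] at hdj
            exact lt_irrefl 0 hdj
          have := hj₀min j hjP
          have : lam * d j ≤ z j := by
            rw [hlam]
            calc z j₀ / d j₀ * d j ≤ z j / d j * d j := by
                  apply mul_le_mul_of_nonneg_right this hdj.le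
              _ = z j := div_mul_cancel₀ _ hdj.ne'
          simp [hz', this]
        · have : lam * d j ≤ 0 := mul_nonpos_of_nonneg_of_nonpos hlam0 (not_lt.mp hdj)
          simp only [hz']
          linarith [hz j]
      have hz'sum : ∑ j, z' j • a j = ∑ j, z j • a j := by
        simp only [hz', sub_smul, Finset.sum_sub_distrib, mul_smul]
        rw [← Finset.smul_sum, hdsum, smul_zero, sub_zero]
      have hz'j₀ : z' j₀ = 0 := by
        simp [hz', hlam, div_mul_cancel₀ _ hdj₀.ne']
      have hcard' : (Finset.univ.filter fun j => z' j ≠ 0).card ≤ n := by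
        have hsub : (Finset.univ.filter fun j => z' j ≠ 0) ⊆ s₀.erase j₀ := by
          intro j hj
          have hzj' : z' j ≠ 0 := (Finset.mem_filter.mp hj).2
          refine Finset.mem_erase.mpr ⟨?_, ?_⟩
          · rintro rfl; exact hzj' hz'j₀
          · by_contra h
            exact hzj' (by simp [hz', hd0 j h, (by simpa [hs₀] using h : z j = 0)])
        calc (Finset.univ.filter fun j => z' j ≠ 0).card ≤ (s₀.erase j₀).card :=
              Finset.card_le_card hsub
          _ = s₀.card - 1 := Finset.card_erase_of_mem hj₀s
          _ ≤ n := by omega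
      obtain ⟨s, z'', h1, h2, h3, h4⟩ := ih z' hcard' hz'0
      exact ⟨s, z'', h1, h2, h3, h4.trans hz'sum⟩

lemma cone_isClosed (a : J → H) :
    IsClosed {x : H | ∃ z : J → ℝ, (∀ j, 0 ≤ z j) ∧ ∑ j, z j • a j = x} := by
  classical
  have hset : {x : H | ∃ z : J → ℝ, (∀ j, 0 ≤ z j) ∧ ∑ j, z j • a j = x} =
      ⋃ s ∈ {s : Finset J | LinearIndependent ℝ (fun j : s => a j)},
        (fun w : s → ℝ => ∑ j : s, w j • a j) '' {w | ∀ j, 0 ≤ w j} := by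
    ext x
    simp only [Set.mem_setOf_eq, Set.mem_iUnion, Set.mem_image, exists_prop]
    constructor
    · rintro ⟨z, hz, rfl⟩
      obtain ⟨s, z', h1, h2, h3, h4⟩ := caratheodory_cone a _ z le_rfl hz
      refine ⟨s, h1, fun j => z' j, fun j => h2 j, ?_⟩
      rw [Finset.sum_coe_sort s (fun j => z' j • a j)]
      rw [Finset.sum_subset (Finset.subset_univ s)
        (fun j _ hj => by rw [h3 j hj, zero_smul])]
      exact h4
    · rintro ⟨s, hs, w, hw, rfl⟩
      refine ⟨fun j => if h : j ∈ s then w ⟨j, h⟩ else 0, fun j => ?_, ?_⟩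
      · by_cases h : j ∈ s
        · simpa [h] using hw ⟨j, h⟩
        · simp [h]
      · rw [← Finset.sum_subset (Finset.subset_univ s)
          (fun j _ hj => by simp only [dif_neg hj, zero_smul])]
        rw [← Finset.sum_coe_sort s]
        exact Finset.sum_congr rfl fun j _ => by simp [j.2]
  rw [hset]
  apply Set.Finite.isClosed_biUnion (Set.toFinite _)
  intro s hs
  set T : (s → ℝ) →ₗ[ℝ] H :=
    { toFun := fun w => ∑ j : s, w j • a j
      map_add' := by
        intro w₁ w₂
        simp [add_smul, Finset.sum_add_distrib]
      map_smul' := by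
        intro c w
        simp [smul_smul, Finset.smul_sum] } with hT
  have hker : LinearMap.ker T = ⊥ := by
    rw [LinearMap.ker_eq_bot']
    intro w hw
    funext j
    exact Fintype.linearIndependent_iff.mp hs w hw j
  have hclosed : IsClosed {w : s → ℝ | ∀ j, 0 ≤ w j} := by
    have : {w : s → ℝ | ∀ j, 0 ≤ w j} = ⋂ j, (fun w : s → ℝ => w j) ⁻¹' Set.Ici 0 := by
      ext w; simp [Set.mem_iInter]
    rw [this]
    exact isClosed_iInter fun j => isClosed_Ici.preimage (continuous_apply j)
  exact (T.isClosedEmbedding_of_injective hker).isClosedMap _ hclosed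

lemma farkas (a : J → H) (b : H)
    (h : ¬ ∃ z : J → ℝ, (∀ j, 0 ≤ z j) ∧ ∑ j, z j • a j = b) :
    ∃ y : H, (∀ j, ⟪a j, y⟫_ℝ ≤ 0) ∧ 0 < ⟪b, y⟫_ℝ := by
  classical
  set K : ConvexCone ℝ H :=
    { carrier := {x : H | ∃ z : J → ℝ, (∀ j, 0 ≤ z j) ∧ ∑ j, z j • a j = x}
      smul_mem' := by
        rintro c hc x ⟨z, hz, rfl⟩
        exact ⟨fun j => c * z j, fun j => mul_nonneg hc.le (hz j),
          by rw [Finset.smul_sum]; exact Finset.sum_congr rfl fun j _ => (smul_smul c (z j) (a j)).symm⟩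
      add_mem' := by
        rintro x ⟨z, hz, rfl⟩ x' ⟨z', hz', rfl⟩
        exact ⟨fun j => z j + z' j, fun j => add_nonneg (hz j) (hz' j),
          by rw [← Finset.sum_add_distrib]; exact Finset.sum_congr rfl fun j _ => add_smul _ _ _⟩ } with hK
  have hne : (K : Set H).Nonempty := ⟨0, ⟨0, fun j => le_rfl, by simp⟩⟩
  have hcl : IsClosed (K : Set H) := cone_isClosed a
  have hb : b ∉ K := h
  obtain ⟨y, hy, hyb⟩ := ProperCone.hyperplane_separation'
    (⟨K.toPointedCone (ConvexCone.Pointed.of_nonempty_of_isClosed hne hcl), hcl⟩ : ProperCone ℝ H) hb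
  refine ⟨-y, fun j => ?_, ?_⟩
  · have haj : a j ∈ K := by
      refine ⟨fun i => if i = j then 1 else 0, fun i => by positivity, ?_⟩
      simp [ite_smul]
    have := hy (a j) haj
    rw [inner_neg_right]
    linarith
  · rw [inner_neg_right, real_inner_comm]
    linarith [real_inner_comm b y]

lemma euclid_sum_apply {X : Type*} [Fintype X] {K : Type*} (s : Finset K)
    (f : K → EuclideanSpace ℝ X) (i : X) : (∑ k ∈ s, f k) i = ∑ k ∈ s, f k i := by
  induction s using Finset.cons_induction with
  | empty => rfl
  | cons k s hk ih => rw [Finset.sum_cons, Finset.sum_cons, ← ih]; rfl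

lemma lp_duality {ι R : Type*} [Fintype ι] [Fintype R] (A : ι → R → ℝ) (b : R → ℝ)
    (c : ι → ℝ) (β : ℝ)
    (hfeas : ∃ w : R → ℝ, ∀ j, c j ≤ ∑ r, A j r * w r)
    (hbound : ∀ w : R → ℝ, (∀ j, c j ≤ ∑ r, A j r * w r) → β ≤ ∑ r, b r * w r) :
    ∃ z : ι → ℝ, (∀ j, 0 ≤ z j) ∧ (∀ r, ∑ j, z j * A j r = b r) ∧ β ≤ ∑ j, z j * c j := by
  classical
  by_contra hno
  set vec : (R → ℝ) → ℝ → EuclideanSpace ℝ (R ⊕ Unit) :=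
    fun v t => (WithLp.equiv 2 _).symm (Sum.elim v fun _ => t) with hvec
  have vec_inl : ∀ v t r, vec v t (Sum.inl r) = v r := fun v t r => rfl
  have vec_inr : ∀ v t u, vec v t (Sum.inr u) = t := fun v t u => rfl
  set a : ι ⊕ Unit → EuclideanSpace ℝ (R ⊕ Unit) :=
    Sum.elim (fun j => vec (A j) (c j)) (fun _ => vec 0 (-1)) with ha
  set b' : EuclideanSpace ℝ (R ⊕ Unit) := vec b β with hb'
  -- no nonnegative combination of `a` gives `b'`
  have h1 : ¬ ∃ z' : ι ⊕ Unit → ℝ, (∀ k, 0 ≤ z' k) ∧ ∑ k, z' k • a k = b' := by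
    rintro ⟨z', hz', hsum⟩
    apply hno
    have hsum' : ∀ i, ∑ k, (z' k • a k) i = b' i := by
      intro i
      rw [← euclid_sum_apply]
      exact congrArg (fun x : EuclideanSpace ℝ (R ⊕ Unit) => x i) hsum
    refine ⟨fun j => z' (Sum.inl j), fun j => hz' _, ?_, ?_⟩
    · intro r
      have := hsum' (Sum.inl r)
      simp only [Fintype.sum_sum_type, Finset.univ_unique, Finset.sum_singleton] at this
      simpa [ha, hb', vec_inl, PiLp.smul_apply, smul_eq_mul] using this
    · have := hsum' (Sum.inr ())
      simp only [Fintype.sum_sum_type, Finset.univ_unique, Finset.sum_singleton] at this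
      simp only [ha, hb', vec_inr, PiLp.smul_apply, smul_eq_mul, Sum.elim_inl, Sum.elim_inr,
        mul_neg, mul_one] at this
      have h2 : ∑ j, z' (Sum.inl j) * c j = β + z' (Sum.inr ()) := by linarith
      rw [h2]
      linarith [hz' (Sum.inr ())]
  obtain ⟨y, hy, hby⟩ := farkas a b' h1
  set w' : R → ℝ := fun r => y (Sum.inl r) with hw'
  set lam : ℝ := y (Sum.inr ()) with hlam
  have hinner : ∀ v t, ⟪vec v t, y⟫_ℝ = ∑ r, v r * w' r + t * lam := by
    intro v t
    rw [PiLp.inner_apply]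
    simp only [RCLike.inner_apply, conj_trivial, Fintype.sum_sum_type, Finset.univ_unique,
      Finset.sum_singleton]
    exact congrArg₂ (· + ·) (Finset.sum_congr rfl fun r _ => mul_comm _ _) (mul_comm _ _)
  have hlam0 : 0 ≤ lam := by
    have := hy (Sum.inr ())
    simp only [ha, Sum.elim_inr, hinner] at this
    simp only [Pi.zero_apply, zero_mul, Finset.sum_const_zero, zero_add] at this
    linarith
  have hAy : ∀ j, ∑ r, A j r * w' r + c j * lam ≤ 0 := by
    intro j
    have := hy (Sum.inl j)
    simpa only [ha, Sum.elim_inl, hinner] using this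
  have hby' : 0 < ∑ r, b r * w' r + β * lam := by
    have := hby
    simpa only [hb', hinner] using this
  rcases eq_or_lt_of_le hlam0 with hlamz | hlampos
  · -- λ = 0 : unbounded dual
    obtain ⟨w₀, hw₀⟩ := hfeas
    rw [← hlamz] at hAy hby'
    simp only [mul_zero, add_zero] at hAy hby'
    set t : ℝ := (∑ r, b r * w₀ r - β + 1) / (∑ r, b r * w' r) with ht
    have hpos : 0 < ∑ r, b r * w' r := hby'
    have h1 : 0 ≤ ∑ r, b r * w₀ r - β := by linarith [hbound w₀ hw₀]
    have ht0 : 0 ≤ t := by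
      rw [ht]
      exact div_nonneg (by linarith) hpos.le
    have hfeas' : ∀ j, c j ≤ ∑ r, A j r * (w₀ r - t * w' r) := by
      intro j
      have expand : ∑ r, A j r * (w₀ r - t * w' r)
          = ∑ r, A j r * w₀ r - t * ∑ r, A j r * w' r := by
        rw [Finset.mul_sum, ← Finset.sum_sub_distrib]
        exact Finset.sum_congr rfl fun r _ => by ring
      rw [expand]
      have := mul_nonpos_of_nonneg_of_nonpos ht0 (hAy j)
      linarith [hw₀ j]
    have := hbound _ hfeas'
    have expand : ∑ r, b r * (w₀ r - t * w' r)
        = ∑ r, b r * w₀ r - t * ∑ r, b r * w' r := by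
      rw [Finset.mul_sum, ← Finset.sum_sub_distrib]
      exact Finset.sum_congr rfl fun r _ => by ring
    rw [expand] at this
    have hts : t * ∑ r, b r * w' r = ∑ r, b r * w₀ r - β + 1 := by
      rw [ht, div_mul_cancel₀ _ hpos.ne']
    rw [hts] at this
    linarith
  · -- λ > 0
    set w : R → ℝ := fun r => (-1 / lam) * w' r with hw
    have hfeasw : ∀ j, c j ≤ ∑ r, A j r * w r := by
      intro j
      have expand : ∑ r, A j r * w r = (-1 / lam) * ∑ r, A j r * w' r := by
        rw [Finset.mul_sum]
        exact Finset.sum_congr rfl fun r _ => by rw [hw]; ring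
      rw [expand]
      have h := hAy j
      rw [div_mul_eq_mul_div, le_div_iff₀ hlampos]
      nlinarith
    have := hbound w hfeasw
    have expand : ∑ r, b r * w r = (-1 / lam) * ∑ r, b r * w' r := by
      rw [Finset.mul_sum]
      exact Finset.sum_congr rfl fun r _ => by rw [hw]; ring
    rw [expand] at this
    rw [div_mul_eq_mul_div, le_div_iff₀ hlampos] at this
    nlinarith

end LLYAux

-- ===== auxiliary material: graph-side lemmas =====

namespace LLY

variable {V : Type*}

-- auxiliary graph lemmas
section GraphAux
variable [Fintype V] {G : SimpleGraph V}

open Classical in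
/-- the neighbor finset -/
noncomputable def nbF (G : SimpleGraph V) (u : V) : Finset V := (G.neighborSet u).toFinset

open Classical in
lemma deg_eq_card (u : V) : deg G u = (nbF G u).card := by
  rw [deg, nbF, Nat.card_eq_card_toFinset]

open Classical in
lemma deg_pos (hconn : G.Connected) [Nontrivial V] (u : V) : 0 < deg G u := by
  obtain ⟨v, hv⟩ := exists_ne u
  obtain ⟨p⟩ := hconn u v
  have hadj : ∃ w, G.Adj u w := by
    cases p with
    | nil => exact absurd rfl (Ne.symm hv)
    | cons h q => exact ⟨_, h⟩
  obtain ⟨w, hw⟩ := hadj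
  rw [deg]
  have : Nonempty (G.neighborSet u) := ⟨⟨w, hw⟩⟩
  exact Nat.card_pos

lemma m0_nonneg (x u : V) : 0 ≤ m0 G x u := by
  rw [m0]
  split
  · positivity
  · exact le_rfl

lemma m0_self (x : V) : m0 G x x = 0 := by
  rw [m0, if_neg (by simp)]

open Classical in
lemma m0_eq (x u : V) : m0 G x u = if u ∈ nbF G x then 1 / (deg G x : ℝ) else 0 := by
  rw [m0]
  by_cases h : u ∈ G.neighborSet x <;> simp [h, nbF]

open Classical in
lemma sum_m0 {x : V} (hx : 0 < deg G x) : ∑ u, m0 G x u = 1 := by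
  have hne : (deg G x : ℝ) ≠ 0 := Nat.cast_ne_zero.mpr hx.ne'
  calc ∑ u, m0 G x u = ∑ u, if u ∈ nbF G x then 1 / (deg G x : ℝ) else 0 :=
        Finset.sum_congr rfl fun u _ => m0_eq x u
    _ = ∑ u ∈ Finset.univ ∩ nbF G x, 1 / (deg G x : ℝ) := Finset.sum_ite_mem _ _ _
    _ = (nbF G x).card * (1 / (deg G x : ℝ)) := by
        rw [Finset.univ_inter, Finset.sum_const, nsmul_eq_mul]
    _ = 1 := by rw [← deg_eq_card, mul_one_div, div_self hne]

open Classical in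
lemma lap_eq {u : V} (hu : 0 < deg G u) (f : V → ℝ) :
    lap G f u = ∑ v, m0 G u v * f v - f u := by
  have hne : (deg G u : ℝ) ≠ 0 := Nat.cast_ne_zero.mpr hu.ne'
  have hset : G.neighborSet u = ↑(nbF G u) := by simp [nbF]
  rw [lap, hset, finsum_mem_coe_finset]
  have h2 : ∑ v, m0 G u v * f v = ∑ v ∈ nbF G u, (1 / (deg G u : ℝ)) * f v := by
    calc ∑ v, m0 G u v * f v
        = ∑ v, (if v ∈ nbF G u then (1 / (deg G u : ℝ)) * f v else 0) := by
          refine Finset.sum_congr rfl fun v _ => ?_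
          rw [m0_eq]
          split <;> simp
      _ = ∑ v ∈ Finset.univ ∩ nbF G u, (1 / (deg G u : ℝ)) * f v := Finset.sum_ite_mem _ _ _
      _ = _ := by rw [Finset.univ_inter]
  rw [h2, ← Finset.mul_sum, Finset.sum_sub_distrib, Finset.sum_const, nsmul_eq_mul,
    ← deg_eq_card, mul_sub]
  congr 1
  field_simp

end GraphAux
section MainAux
variable [Fintype V] {G : SimpleGraph V}

lemma coupling_sum_eq {x y : V} (hconn : G.Connected) (hne : x ≠ y)
    {B : V × V → ℝ} (hB : IsStarCoupling G x y B) (f : V → ℝ) :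
    ∑ p : V × V, B p * (f p.2 - f p.1) =
      (∑ u, m0 G x u * f u - f x) - (∑ v, m0 G y v * f v - f y) := by
  classical
  haveI : Nontrivial V := ⟨x, y, hne⟩
  obtain ⟨-, -, -, htot, hrow, hcol⟩ := hB
  rw [finsum_eq_sum_of_fintype] at htot
  have hrow' : ∀ u, u ≠ x → ∑ v, B (u, v) = -m0 G x u := fun u hu => by
    have := hrow u hu; rwa [finsum_eq_sum_of_fintype] at this
  have hcol' : ∀ v, v ≠ y → ∑ u, B (u, v) = -m0 G y v := fun v hv => by
    have := hcol v hv; rwa [finsum_eq_sum_of_fintype] at this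
  have hsum_m0x : ∑ u, m0 G x u = 1 := sum_m0 (deg_pos hconn x)
  have hsum_m0y : ∑ v, m0 G y v = 1 := sum_m0 (deg_pos hconn y)
  have herase_x : ∑ u ∈ Finset.univ.erase x, m0 G x u = 1 := by
    have := Finset.sum_erase_add Finset.univ (m0 G x) (Finset.mem_univ x)
    rw [m0_self, add_zero] at this
    rw [this, hsum_m0x]
  have herase_y : ∑ v ∈ Finset.univ.erase y, m0 G y v = 1 := by
    have := Finset.sum_erase_add Finset.univ (m0 G y) (Finset.mem_univ y)
    rw [m0_self, add_zero] at this
    rw [this, hsum_m0y]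
  -- row sum at x is 1
  have hrowX : ∑ v, B (x, v) = 1 := by
    have e1 : ∑ p : V × V, B p = ∑ u, ∑ v, B (u, v) := Fintype.sum_prod_type _
    have e2 : ∑ u, ∑ v, B (u, v)
        = (∑ u ∈ Finset.univ.erase x, ∑ v, B (u, v)) + ∑ v, B (x, v) :=
      (Finset.sum_erase_add _ _ (Finset.mem_univ x)).symm
    have e3 : ∑ u ∈ Finset.univ.erase x, ∑ v, B (u, v) = -1 := by
      rw [Finset.sum_congr rfl fun u hu => hrow' u (Finset.mem_erase.mp hu).1]
      rw [Finset.sum_neg_distrib, herase_x]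
    rw [e1, e2, e3] at htot
    linarith
  have hcolY : ∑ u, B (u, y) = 1 := by
    have e1 : ∑ p : V × V, B p = ∑ v, ∑ u, B (u, v) := Fintype.sum_prod_type_right _
    have e2 : ∑ v, ∑ u, B (u, v)
        = (∑ v ∈ Finset.univ.erase y, ∑ u, B (u, v)) + ∑ u, B (u, y) :=
      (Finset.sum_erase_add _ _ (Finset.mem_univ y)).symm
    have e3 : ∑ v ∈ Finset.univ.erase y, ∑ u, B (u, v) = -1 := by
      rw [Finset.sum_congr rfl fun v hv => hcol' v (Finset.mem_erase.mp hv).1]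
      rw [Finset.sum_neg_distrib, herase_y]
    rw [e1, e2, e3] at htot
    linarith
  have h2 : ∑ p : V × V, B p * f p.2 = f y - ∑ v, m0 G y v * f v := by
    have e1 : ∑ p : V × V, B p * f p.2 = ∑ v, (∑ u, B (u, v)) * f v := by
      rw [Fintype.sum_prod_type_right]
      refine Finset.sum_congr rfl fun v _ => ?_
      show (∑ u : V, B (u, v) * f v) = (∑ u : V, B (u, v)) * f v
      exact (Finset.sum_mul _ _ _).symm
    have e2 : ∑ v, (∑ u, B (u, v)) * f v
        = (∑ v ∈ Finset.univ.erase y, (∑ u, B (u, v)) * f v) + (∑ u, B (u, y)) * f y :=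
      (Finset.sum_erase_add _ _ (Finset.mem_univ y)).symm
    have e3 : ∑ v ∈ Finset.univ.erase y, (∑ u, B (u, v)) * f v
        = -∑ v ∈ Finset.univ.erase y, m0 G y v * f v := by
      rw [← Finset.sum_neg_distrib]
      refine Finset.sum_congr rfl fun v hv => ?_
      rw [hcol' v (Finset.mem_erase.mp hv).1]
      ring
    have e4 : ∑ v ∈ Finset.univ.erase y, m0 G y v * f v = ∑ v, m0 G y v * f v := by
      rw [← Finset.sum_erase_add Finset.univ _ (Finset.mem_univ y)]
      simp [m0_self]
    rw [e1, e2, e3, e4, hcolY, one_mul]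
    ring
  have h1 : ∑ p : V × V, B p * f p.1 = f x - ∑ u, m0 G x u * f u := by
    have e1 : ∑ p : V × V, B p * f p.1 = ∑ u, (∑ v, B (u, v)) * f u := by
      rw [Fintype.sum_prod_type]
      refine Finset.sum_congr rfl fun u _ => ?_
      show (∑ v : V, B (u, v) * f u) = (∑ v : V, B (u, v)) * f u
      exact (Finset.sum_mul _ _ _).symm
    have e2 : ∑ u, (∑ v, B (u, v)) * f u
        = (∑ u ∈ Finset.univ.erase x, (∑ v, B (u, v)) * f u) + (∑ v, B (x, v)) * f x :=
      (Finset.sum_erase_add _ _ (Finset.mem_univ x)).symm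
    have e3 : ∑ u ∈ Finset.univ.erase x, (∑ v, B (u, v)) * f u
        = -∑ u ∈ Finset.univ.erase x, m0 G x u * f u := by
      rw [← Finset.sum_neg_distrib]
      refine Finset.sum_congr rfl fun u hu => ?_
      rw [hrow' u (Finset.mem_erase.mp hu).1]
      ring
    have e4 : ∑ u ∈ Finset.univ.erase x, m0 G x u * f u = ∑ u, m0 G x u * f u := by
      rw [← Finset.sum_erase_add Finset.univ _ (Finset.mem_univ x)]
      simp [m0_self]
    rw [e1, e2, e3, e4, hrowX, one_mul]
    ring
  calc ∑ p : V × V, B p * (f p.2 - f p.1)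
      = ∑ p : V × V, B p * f p.2 - ∑ p : V × V, B p * f p.1 := by
        rw [← Finset.sum_sub_distrib]
        exact Finset.sum_congr rfl fun p _ => by ring
    _ = _ := by rw [h1, h2]; ring

lemma weak_duality {x y : V} (hconn : G.Connected) (hne : x ≠ y)
    {B : V × V → ℝ} (hB : IsStarCoupling G x y B) (f : V → ℝ) (hf : Lip1 G f)
    (hfy : f y - f x = (G.dist x y : ℝ)) :
    ∑ p : V × V, B p * (G.dist p.1 p.2 : ℝ) ≤
      (∑ u, m0 G x u * f u - f x) - (∑ v, m0 G y v * f v - f y) := by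
  rw [← coupling_sum_eq hconn hne hB f]
  refine Finset.sum_le_sum fun p _ => ?_
  by_cases hp : p = (x, y)
  · subst hp
    show B (x, y) * (G.dist x y : ℝ) ≤ B (x, y) * (f y - f x)
    rw [hfy]
  · have hBp := hB.2.2.1 p hp
    have hlip : f p.2 - f p.1 ≤ (G.dist p.1 p.2 : ℝ) := by
      calc f p.2 - f p.1 ≤ |f p.2 - f p.1| := le_abs_self _
        _ ≤ (G.dist p.2 p.1 : ℝ) := hf _ _
        _ = (G.dist p.1 p.2 : ℝ) := by rw [SimpleGraph.dist_comm]
    exact mul_le_mul_of_nonpos_left hlip hBp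

lemma strong_duality {x y : V} (hconn : G.Connected) (hne : x ≠ y) (β : ℝ)
    (hβ : ∀ f : V → ℝ, Lip1 G f → f y - f x = (G.dist x y : ℝ) →
      β ≤ (∑ u, m0 G x u * f u - f x) - (∑ v, m0 G y v * f v - f y)) :
    ∃ B : V × V → ℝ, IsStarCoupling G x y B ∧
      β ≤ ∑ p : V × V, B p * (G.dist p.1 p.2 : ℝ) := by
  classical
  haveI : Nontrivial V := ⟨x, y, hne⟩
  haveI : Nonempty V := ⟨x⟩
  have hD : 0 < (G.dist x y : ℝ) := by exact_mod_cast hconn.pos_dist_of_ne hne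
  set D : ℝ := (G.dist x y : ℝ) with hDdef
  have htri : ∀ a b c : V, (G.dist a c : ℝ) ≤ (G.dist a b : ℝ) + (G.dist b c : ℝ) := by
    intro a b c; exact_mod_cast hconn.dist_triangle
  have hdcomm : ∀ a b : V, (G.dist a b : ℝ) = (G.dist b a : ℝ) := fun a b => by
    rw [SimpleGraph.dist_comm]
  have hdself : ∀ a : V, (G.dist a a : ℝ) = 0 := fun a => by simp
  set A : V × V → V ⊕ V → ℝ := fun p r =>
    Sum.elim (fun r₁ => if p.1 = r₁ ∧ r₁ ≠ x then 1 else 0)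
      (fun r₂ => if p.2 = r₂ ∧ r₂ ≠ y then 1 else 0) r with hA
  set bb : V ⊕ V → ℝ := Sum.elim (fun r₁ => m0 G x r₁) (fun r₂ => m0 G y r₂) with hbb
  set cc : V × V → ℝ := fun p => D - (G.dist p.1 p.2 : ℝ) with hcc
  have key : ∀ (q t : V) (g : V → ℝ),
      ∑ r, (if q = r ∧ r ≠ t then (1:ℝ) else 0) * g r = if q = t then 0 else g q := by
    intro q t g
    rw [Finset.sum_eq_single q]
    · by_cases hq : q = t <;> simp [hq]
    · intro b _ hb
      rw [if_neg (fun h => hb h.1.symm), zero_mul]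
    · intro h; exact absurd (Finset.mem_univ q) h
  have hAsum : ∀ (p : V × V) (w : V ⊕ V → ℝ), ∑ r, A p r * w r =
      (if p.1 = x then 0 else w (Sum.inl p.1)) + (if p.2 = y then 0 else w (Sum.inr p.2)) := by
    intro p w
    rw [Fintype.sum_sum_type]
    simp only [hA, Sum.elim_inl, Sum.elim_inr]
    rw [key p.1 x (fun r => w (Sum.inl r)), key p.2 y (fun r => w (Sum.inr r))]
  -- dual feasibility
  have hfeas : ∃ w : V ⊕ V → ℝ, ∀ j, cc j ≤ ∑ r, A j r * w r := by
    refine ⟨Sum.elim (fun u => (G.dist x u : ℝ)) (fun v => D - (G.dist x v : ℝ)), fun p => ?_⟩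
    rw [hAsum]
    simp only [Sum.elim_inl, Sum.elim_inr, hcc]
    by_cases h1 : p.1 = x <;> by_cases h2 : p.2 = y <;> simp only [h1, h2, if_pos, if_neg,
      ite_true, ite_false]
    · rw [← hDdef]; linarith
    · linarith
    · have := htri x p.1 y; rw [← hDdef] at this; linarith
    · have := htri x p.1 p.2; linarith
  -- dual boundedness from Lipschitz functions
  have hbound : ∀ w : V ⊕ V → ℝ, (∀ j, cc j ≤ ∑ r, A j r * w r) → β ≤ ∑ r, bb r * w r := by
    intro w hw
    have hw' : ∀ p : V × V, D - (G.dist p.1 p.2 : ℝ) ≤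
        (if p.1 = x then 0 else w (Sum.inl p.1)) + (if p.2 = y then 0 else w (Sum.inr p.2)) := by
      intro p
      have := hw p
      rwa [hAsum] at this
    set g : V → ℝ := fun u => if u = x then 0 else w (Sum.inl u) with hg
    set f : V → ℝ := fun v => Finset.univ.inf' Finset.univ_nonempty
      (fun u => g u + (G.dist u v : ℝ)) with hf
    have hfle : ∀ u v, f v ≤ g u + (G.dist u v : ℝ) := fun u v =>
      Finset.inf'_le _ (Finset.mem_univ u)
    have hfge : ∀ (v : V) (k : ℝ), (∀ u, k ≤ g u + (G.dist u v : ℝ)) → k ≤ f v := fun v k h =>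
      Finset.le_inf' _ _ (fun u _ => h u)
    have hfex : ∀ v, ∃ u, f v = g u + (G.dist u v : ℝ) := fun v => by
      obtain ⟨u, -, h⟩ := Finset.exists_mem_eq_inf' Finset.univ_nonempty
        (fun u => g u + (G.dist u v : ℝ))
      exact ⟨u, h⟩
    have hgx : g x = 0 := by rw [hg]; simp
    have hglb : ∀ u, D - (G.dist u y : ℝ) ≤ g u := by
      intro u
      by_cases hu : u = x
      · subst hu; rw [hgx, ← hDdef]; linarith
      · have h := hw' (u, y)
        simp only [if_neg hu, if_pos rfl, ite_true] at h
        have : g u = w (Sum.inl u) := by rw [hg]; simp [hu]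
        rw [this]
        simpa using h
    have hfx : f x = 0 := by
      refine le_antisymm ?_ (hfge x 0 fun u => ?_)
      · have h := hfle x x
        rw [hgx, hdself] at h
        linarith
      · have h1 := hglb u
        have h2 := htri u x y
        rw [← hDdef] at h2
        linarith
    have hfy : f y = D := by
      refine le_antisymm ?_ (hfge y D fun u => ?_)
      · have h := hfle x y
        rw [hgx, ← hDdef] at h
        linarith
      · have := hglb u
        linarith
    have hLip : Lip1 G f := by
      intro a b
      rw [abs_sub_le_iff]
      constructor
      · obtain ⟨u, hu⟩ := hfex b
        have h2 := hfle u a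
        have h3 := htri u b a
        have h4 := hdcomm a b
        linarith
      · obtain ⟨u, hu⟩ := hfex a
        have h2 := hfle u b
        have h3 := htri u a b
        linarith
    have hfvD : ∀ v, v ≠ y → D - w (Sum.inr v) ≤ f v := by
      intro v hv
      refine hfge v _ fun u => ?_
      have h := hw' (u, v)
      rw [if_neg hv] at h
      by_cases hu : u = x
      · subst hu
        rw [if_pos rfl] at h
        rw [hgx]
        linarith
      · rw [if_neg hu] at h
        have : g u = w (Sum.inl u) := by rw [hg]; simp [hu]
        rw [this]
        linarith
    have hβf := hβ f hLip (by rw [hfy, hfx, hDdef]; ring)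
    have hdy : 0 < deg G y := deg_pos hconn y
    have hb1 : ∑ u, m0 G x u * f u ≤ ∑ u, m0 G x u * w (Sum.inl u) := by
      refine Finset.sum_le_sum fun u _ => ?_
      by_cases hu : u = x
      · subst hu; rw [m0_self]; ring_nf; exact le_rfl
      · have h1 := hfle u u
        rw [hdself] at h1
        have h2 : g u = w (Sum.inl u) := by rw [hg]; simp [hu]
        rw [h2] at h1
        exact mul_le_mul_of_nonneg_left (by linarith : f u ≤ w (Sum.inl u)) (m0_nonneg x u)
    have hb2 : ∑ v, m0 G y v * (D - f v) ≤ ∑ v, m0 G y v * w (Sum.inr v) := by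
      refine Finset.sum_le_sum fun v _ => ?_
      by_cases hv : v = y
      · subst hv; rw [m0_self]; ring_nf; exact le_rfl
      · have h1 := hfvD v hv
        exact mul_le_mul_of_nonneg_left (by linarith : D - f v ≤ w (Sum.inr v)) (m0_nonneg y v)
    have hsplit : ∑ r : V ⊕ V, bb r * w r =
        ∑ u, m0 G x u * w (Sum.inl u) + ∑ v, m0 G y v * w (Sum.inr v) := by
      rw [Fintype.sum_sum_type]
      simp only [hbb, Sum.elim_inl, Sum.elim_inr]
    have hrew : ∑ v, m0 G y v * (D - f v) = D - ∑ v, m0 G y v * f v := by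
      have e1 : ∑ v, m0 G y v * (D - f v) = ∑ v, (m0 G y v * D - m0 G y v * f v) :=
        Finset.sum_congr rfl fun v _ => by ring
      rw [e1, Finset.sum_sub_distrib, ← Finset.sum_mul, sum_m0 hdy, one_mul]
    rw [hsplit]
    have : β ≤ ∑ u, m0 G x u * f u + ∑ v, m0 G y v * (D - f v) := by
      rw [hrew, hfx, hfy] at *
      linarith
    linarith
  obtain ⟨z, hz0, hzmarg, hzval⟩ := LLYAux.lp_duality A bb cc β hfeas hbound
  -- extract marginals
  have key2 : ∀ (u t : V), u ≠ t →
      ∑ p : V × V, z p * (if p.1 = u ∧ u ≠ t then 1 else 0) = ∑ v, z (u, v) := by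
    intro u t hu
    rw [Fintype.sum_prod_type]
    rw [Finset.sum_eq_single u]
    · exact Finset.sum_congr rfl fun b _ => by rw [if_pos ⟨rfl, hu⟩, mul_one]
    · intro a _ ha
      refine Finset.sum_eq_zero fun b _ => ?_
      rw [if_neg (fun h => ha h.1), mul_zero]
    · intro h; exact absurd (Finset.mem_univ u) h
  have key3 : ∀ (v t : V), v ≠ t →
      ∑ p : V × V, z p * (if p.2 = v ∧ v ≠ t then 1 else 0) = ∑ u, z (u, v) := by
    intro v t hv
    rw [Fintype.sum_prod_type_right]
    rw [Finset.sum_eq_single v]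
    · exact Finset.sum_congr rfl fun a _ => by rw [if_pos ⟨rfl, hv⟩, mul_one]
    · intro b _ hb
      refine Finset.sum_eq_zero fun a _ => ?_
      rw [if_neg (fun h => hb h.1), mul_zero]
    · intro h; exact absurd (Finset.mem_univ v) h
  have hmargrow : ∀ u, u ≠ x → ∑ v, z (u, v) = m0 G x u := by
    intro u hu
    have h := hzmarg (Sum.inl u)
    simp only [hA, Sum.elim_inl, hbb] at h
    rw [key2 u x hu] at h
    exact h
  have hmargcol : ∀ v, v ≠ y → ∑ u, z (u, v) = m0 G y v := by
    intro v hv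
    have h := hzmarg (Sum.inr v)
    simp only [hA, Sum.elim_inr, hbb] at h
    rw [key3 v y hv] at h
    exact h
  -- build the coupling
  set E : Finset (V × V) := Finset.univ.erase (x, y) with hE
  set B : V × V → ℝ := fun p => if p = (x, y) then ∑ q ∈ E, z q else -z p with hB'
  have hBxy : B (x, y) = ∑ q ∈ E, z q := by rw [hB']; simp
  have hBne : ∀ p, p ≠ (x, y) → B p = -z p := fun p hp => by rw [hB']; simp [hp]
  have hdegx : 0 < deg G x := deg_pos hconn x
  have hfilter : ∑ q ∈ Finset.univ.filter (fun q : V × V => q.1 ≠ x), z q = 1 := by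
    rw [Finset.sum_filter, Fintype.sum_prod_type]
    have e1 : ∀ a : V, (∑ b, if (a, b).1 ≠ x then z (a, b) else 0)
        = if a = x then 0 else m0 G x a := by
      intro a
      by_cases ha : a = x
      · simp [ha]
      · simp only [ha, ite_false, if_neg, Prod.fst]
        rw [Finset.sum_congr rfl fun b _ => if_pos ha]
        exact hmargrow a ha
    rw [Finset.sum_congr rfl fun a _ => e1 a]
    have e2 : ∑ a, (if a = x then 0 else m0 G x a) = ∑ a, m0 G x a := by
      refine Finset.sum_congr rfl fun a _ => ?_
      by_cases ha : a = x
      · subst ha; rw [if_pos rfl, m0_self]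
      · rw [if_neg ha]
    rw [e2, sum_m0 hdegx]
  have hBxy_pos : 0 < B (x, y) := by
    rw [hBxy]
    have hsub : Finset.univ.filter (fun q : V × V => q.1 ≠ x) ⊆ E := by
      intro q hq
      have hq1 := (Finset.mem_filter.mp hq).2
      refine Finset.mem_erase.mpr ⟨fun h => hq1 (by rw [h]), Finset.mem_univ q⟩
    have := Finset.sum_le_sum_of_subset_of_nonneg hsub (fun q _ _ => hz0 q)
    rw [hfilter] at this
    linarith
  have hcoupling : IsStarCoupling G x y B := by
    refine ⟨Set.toFinite _, hBxy_pos, fun p hp => by rw [hBne p hp]; linarith [hz0 p], ?_, ?_, ?_⟩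
    · rw [finsum_eq_sum_of_fintype]
      rw [← Finset.sum_erase_add _ _ (Finset.mem_univ (x, y)), hBxy]
      rw [Finset.sum_congr rfl fun q hq => hBne q (Finset.mem_erase.mp hq).1]
      rw [Finset.sum_neg_distrib]
      rw [← hE]
      ring
    · intro u hu
      rw [finsum_eq_sum_of_fintype]
      rw [Finset.sum_congr rfl fun v _ => hBne (u, v) (fun h => hu (congrArg Prod.fst h))]
      rw [Finset.sum_neg_distrib, hmargrow u hu]
    · intro v hv
      rw [finsum_eq_sum_of_fintype]
      rw [Finset.sum_congr rfl fun u _ => hBne (u, v) (fun h => hv (congrArg Prod.snd h))]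
      rw [Finset.sum_neg_distrib, hmargcol v hv]
  refine ⟨B, hcoupling, ?_⟩
  have hval : ∑ p : V × V, B p * (G.dist p.1 p.2 : ℝ) = ∑ p : V × V, z p * cc p := by
    rw [← Finset.sum_erase_add _ _ (Finset.mem_univ (x, y)),
      ← Finset.sum_erase_add _ (fun p => z p * cc p) (Finset.mem_univ (x, y))]
    rw [← hE]
    have e1 : ∑ q ∈ E, B q * (G.dist q.1 q.2 : ℝ) = -∑ q ∈ E, z q * (G.dist q.1 q.2 : ℝ) := by
      rw [← Finset.sum_neg_distrib]
      exact Finset.sum_congr rfl fun q hq => by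
        rw [hBne q (Finset.mem_erase.mp hq).1]; ring
    have e2 : ∑ q ∈ E, z q * cc q
        = (∑ q ∈ E, z q) * D - ∑ q ∈ E, z q * (G.dist q.1 q.2 : ℝ) := by
      rw [Finset.sum_mul, ← Finset.sum_sub_distrib]
      exact Finset.sum_congr rfl fun q _ => by rw [hcc]; ring
    have e3 : cc (x, y) = 0 := by rw [hcc]; show D - (G.dist x y : ℝ) = 0; rw [← hDdef]; ring
    rw [e1, e2, hBxy, e3]
    show -∑ q ∈ E, z q * (G.dist q.1 q.2 : ℝ) + (∑ q ∈ E, z q) * (G.dist x y : ℝ)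
      = (∑ q ∈ E, z q) * D - ∑ q ∈ E, z q * (G.dist q.1 q.2 : ℝ) + z (x, y) * 0
    rw [← hDdef]
    ring
  rw [hval]
  exact hzval

end MainAux

end LLY

open LLY in
/-- **Bai–Huang–Lu–Yau.** For a finite connected simple graph `G` and
distinct vertices `x ≠ y`,
`κ(x,y) = (1/d(x,y)) · sup_B ∑_{u,v} B(u,v) d(u,v)`, the supremum being over all
`*`-couplings `B` between `m_x^0` and `m_y^0`. -/
theorem curvature_via_star_coupling {V : Type*} [Fintype V] (G : SimpleGraph V)
    (hconn : G.Connected) (x y : V) (hne : x ≠ y) :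
    kappa G x y =
      (1 / (G.dist x y : ℝ)) *
        sSup {s : ℝ | ∃ B : V × V → ℝ, IsStarCoupling G x y B ∧
          s = ∑ᶠ p : V × V, B p * (G.dist p.1 p.2 : ℝ)} := by
  classical
  haveI : Nontrivial V := ⟨x, y, hne⟩
  haveI : Nonempty V := ⟨x⟩
  have hD : 0 < (G.dist x y : ℝ) := by exact_mod_cast hconn.pos_dist_of_ne hne
  have hdegx : 0 < deg G x := deg_pos hconn x
  have hdegy : 0 < deg G y := deg_pos hconn y
  set D : ℝ := (G.dist x y : ℝ) with hDdef
  set S : Set ℝ := {s : ℝ | ∃ B : V × V → ℝ, IsStarCoupling G x y B ∧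
      s = ∑ᶠ p : V × V, B p * (G.dist p.1 p.2 : ℝ)} with hS
  set Lf : (V → ℝ) → ℝ :=
    fun f => (∑ u, m0 G x u * f u - f x) - (∑ v, m0 G y v * f v - f y) with hLf
  set T : Set ℝ := {t : ℝ | ∃ f : V → ℝ, Lip1 G f ∧ f y - f x = D ∧ t = Lf f} with hT
  -- the Lipschitz sets coincide up to scaling
  have hgradlap : ∀ f : V → ℝ, grad G (lap G f) x y = Lf f / D := by
    intro f
    rw [grad, lap_eq hdegx, lap_eq hdegy, hLf]
  have hdyx : (G.dist y x : ℝ) = D := by rw [hDdef]; norm_cast; exact SimpleGraph.dist_comm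
  have hgrad1 : ∀ f : V → ℝ, grad G f y x = 1 ↔ f y - f x = D := by
    intro f
    rw [grad, hdyx, div_eq_one_iff_eq hD.ne']
  have hKT : {k : ℝ | ∃ f : V → ℝ, Lip1 G f ∧ grad G f y x = 1 ∧ k = grad G (lap G f) x y}
      = (fun t => t / D) '' T := by
    ext k
    simp only [Set.mem_setOf_eq, Set.mem_image, hT]
    constructor
    · rintro ⟨f, hL, hg, rfl⟩
      exact ⟨Lf f, ⟨f, hL, (hgrad1 f).mp hg, rfl⟩, (hgradlap f).symm⟩
    · rintro ⟨t, ⟨f, hL, hfy, rfl⟩, rfl⟩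
      exact ⟨f, hL, (hgrad1 f).mpr hfy, (hgradlap f).symm⟩
  -- T is nonempty
  have hTne : T.Nonempty := by
    refine ⟨Lf (fun v => (G.dist x v : ℝ)), ⟨fun v => (G.dist x v : ℝ), ?_, ?_, rfl⟩⟩
    · intro a b
      rw [abs_sub_le_iff]
      have t1 : (G.dist x a : ℝ) ≤ G.dist x b + G.dist b a := by
        exact_mod_cast hconn.dist_triangle
      have t2 : (G.dist x b : ℝ) ≤ G.dist x a + G.dist a b := by
        exact_mod_cast hconn.dist_triangle
      have hc : (G.dist b a : ℝ) = G.dist a b := by norm_cast; exact SimpleGraph.dist_comm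
      constructor <;> linarith
    · rw [hDdef]
      simp
  -- T is bounded below
  have hTbdd : BddBelow T := by
    refine ⟨-(∑ u, m0 G x u * (G.dist x u : ℝ)) - ∑ v, m0 G y v * (G.dist y v : ℝ), ?_⟩
    rintro t ⟨f, hL, hfy, rfl⟩
    have hx1 : ∑ u, m0 G x u * f u - f x = ∑ u, m0 G x u * (f u - f x) := by
      rw [Finset.sum_congr rfl fun u _ => (mul_sub (m0 G x u) (f u) (f x)),
        Finset.sum_sub_distrib, ← Finset.sum_mul, sum_m0 hdegx, one_mul]
    have hy1 : ∑ v, m0 G y v * f v - f y = ∑ v, m0 G y v * (f v - f y) := by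
      rw [Finset.sum_congr rfl fun v _ => (mul_sub (m0 G y v) (f v) (f y)),
        Finset.sum_sub_distrib, ← Finset.sum_mul, sum_m0 hdegy, one_mul]
    have hb1 : ∑ u, m0 G x u * (f u - f x) ≥ -∑ u, m0 G x u * (G.dist x u : ℝ) := by
      rw [← Finset.sum_neg_distrib]
      refine Finset.sum_le_sum fun u _ => ?_
      have h1 : |f u - f x| ≤ (G.dist u x : ℝ) := hL u x
      have hc : (G.dist u x : ℝ) = G.dist x u := by norm_cast; exact SimpleGraph.dist_comm
      have h2 : -(G.dist x u : ℝ) ≤ f u - f x := by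
        rw [← hc]; linarith [neg_abs_le (f u - f x)]
      have := mul_le_mul_of_nonneg_left h2 (m0_nonneg (G := G) x u)
      linarith [this]
    have hb2 : ∑ v, m0 G y v * (f v - f y) ≤ ∑ v, m0 G y v * (G.dist y v : ℝ) := by
      refine Finset.sum_le_sum fun v _ => ?_
      have h1 : |f v - f y| ≤ (G.dist v y : ℝ) := hL v y
      have hc : (G.dist v y : ℝ) = G.dist y v := by norm_cast; exact SimpleGraph.dist_comm
      have h2 : f v - f y ≤ (G.dist y v : ℝ) := by rw [← hc]; linarith [le_abs_self (f v - f y)]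
      exact mul_le_mul_of_nonneg_left h2 (m0_nonneg y v)
    rw [hLf]
    simp only
    rw [hx1, hy1]
    linarith
  set β : ℝ := sInf T with hβ
  -- strong duality gives an optimal coupling
  obtain ⟨B, hBcoup, hBval⟩ := strong_duality hconn hne β
    (fun f hL hfy => csInf_le hTbdd ⟨f, hL, hfy, rfl⟩)
  have hBsum : (∑ᶠ p : V × V, B p * (G.dist p.1 p.2 : ℝ))
      = ∑ p : V × V, B p * (G.dist p.1 p.2 : ℝ) := finsum_eq_sum_of_fintype _
  set sval : ℝ := ∑ p : V × V, B p * (G.dist p.1 p.2 : ℝ) with hsval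
  have hsvalS : sval ∈ S := ⟨B, hBcoup, hBsum.symm⟩
  have hweak : ∀ s ∈ S, ∀ t ∈ T, s ≤ t := by
    rintro s ⟨B', hB', rfl⟩ t ⟨f, hL, hfy, rfl⟩
    rw [finsum_eq_sum_of_fintype]
    exact weak_duality hconn hne hB' f hL (by rw [hfy])
  have hsval_ge : β ≤ sval := hBval
  have hSbdd : BddAbove S := ⟨β, fun s hs => le_csInf hTne (hweak s hs)⟩
  have hsup : sSup S = β :=
    le_antisymm (csSup_le ⟨sval, hsvalS⟩ fun s hs => le_csInf hTne (hweak s hs))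
      (le_trans hsval_ge (le_csSup hSbdd hsvalS))
  -- conclude
  have hmono : Monotone (fun t : ℝ => t / D) := fun a b hab => by
    simpa only [div_eq_mul_inv] using mul_le_mul_of_nonneg_right hab (by positivity : (0:ℝ) ≤ D⁻¹)
  have hinf : sInf ((fun t => t / D) '' T) = sInf T / D :=
    (Monotone.map_csInf_of_continuousAt (continuous_id.div_const D).continuousAt
      hmono hTne hTbdd).symm
  rw [kappa, hKT, hinf, hsup]
  ring
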